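/- Let Δ > 0, ε ≥ 0, δ ∈ [0,1], and let μ₀ and μ₁ be Borel probability measures on the interval [0, Δ] whose cumulative distribution functions satisfy F₀(t) ≤ e^ε·F₁(t) + δ for every t ∈ [0, Δ]. Let a = ∫ c dμ₀(c) and b = ∫ (Δ − c) dμ₁(c). Then a + e^ε·b ≥ (1 − δ)·Δ, and consequently max(a, b) ≥ (1 − δ)·Δ/(1 + e^ε). -/

import Mathlib

open MeasureTheory

private lemma toReal_prob_le_one (μ : Measure ℝ) [IsProbabilityMeasure μ] (s : Set ℝ) :
    (μ s).toReal ≤ 1 := by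
  calc (μ s).toReal ≤ (μ Set.univ).toReal :=
        ENNReal.toReal_mono (measure_ne_top _ _) (measure_mono (Set.subset_univ _))
    _ = 1 := by simp

/-- Analytic core of the additive privacy lower bound: if `μ₀, μ₁` are
probability measures supported on `[0, Δ]` whose CDFs satisfy
`F₀(t) ≤ e^ε F₁(t) + δ` for all `t ∈ [0, Δ]`, then with `a = ∫ c dμ₀` and
`b = ∫ (Δ - c) dμ₁` we have `a + e^ε·b ≥ (1 - δ)·Δ`, and consequently
`max(a, b) ≥ (1 - δ)·Δ/(1 + e^ε)`. -/
theorem stmt11 (Δ : ℝ) (hΔ : 0 < Δ) (ε : ℝ) (hε : 0 ≤ ε) (δ : ℝ)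
    (hδ : δ ∈ Set.Icc (0 : ℝ) 1)
    (μ₀ μ₁ : Measure ℝ) [IsProbabilityMeasure μ₀] [IsProbabilityMeasure μ₁]
    (hsupp₀ : μ₀ (Set.Icc 0 Δ)ᶜ = 0) (hsupp₁ : μ₁ (Set.Icc 0 Δ)ᶜ = 0)
    (hdp : ∀ t ∈ Set.Icc (0 : ℝ) Δ,
      (μ₀ (Set.Iic t)).toReal ≤ Real.exp ε * (μ₁ (Set.Iic t)).toReal + δ)
    (a b : ℝ) (ha : a = ∫ c, c ∂μ₀) (hb : b = ∫ c, (Δ - c) ∂μ₁) :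
    (1 - δ) * Δ ≤ a + Real.exp ε * b ∧
      (1 - δ) * Δ / (1 + Real.exp ε) ≤ max a b := by
  -- a.e. support facts
  have hae₀ : ∀ᵐ c ∂μ₀, c ∈ Set.Icc 0 Δ := by
    exact mem_ae_iff.mpr hsupp₀
  have hae₁ : ∀ᵐ c ∂μ₁, c ∈ Set.Icc 0 Δ := by
    exact mem_ae_iff.mpr hsupp₁
  -- integrability
  have int₀ : Integrable (fun c : ℝ => c) μ₀ := by
    refine Integrable.mono' (integrable_const Δ) aestronglyMeasurable_id ?_
    filter_upwards [hae₀] with c hc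
    rw [Real.norm_eq_abs, abs_le]
    exact ⟨by linarith [hc.1], hc.2⟩
  have int₁ : Integrable (fun c : ℝ => Δ - c) μ₁ := by
    refine Integrable.mono' (integrable_const Δ) ?_ ?_
    · exact (measurable_const.sub measurable_id).aestronglyMeasurable
    · filter_upwards [hae₁] with c hc
      rw [Real.norm_eq_abs, abs_le]
      exact ⟨by linarith [hc.2], by linarith [hc.1]⟩
  -- layer-cake representations
  have hA : a = ∫ t in Set.Ioc 0 Δ, (μ₀ (Set.Ici t)).toReal := by
    rw [ha, int₀.integral_eq_integral_Ioc_meas_le (M := Δ)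
      (by filter_upwards [hae₀] with c hc using hc.1)
      (by filter_upwards [hae₀] with c hc using hc.2)]
    rfl
  have hB : b = ∫ t in Set.Ioc 0 Δ, (μ₁ (Set.Iic (Δ - t))).toReal := by
    rw [hb, int₁.integral_eq_integral_Ioc_meas_le (M := Δ)
      (by filter_upwards [hae₁] with c hc; simpa using hc.2)
      (by filter_upwards [hae₁] with c hc; simpa using hc.1)]
    have hset : ∀ t : ℝ, {c : ℝ | t ≤ Δ - c} = Set.Iic (Δ - t) := by
      intro t
      ext c
      simp only [Set.mem_setOf_eq, Set.mem_Iic]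
      constructor <;> intro h <;> linarith
    simp only [hset]
    rfl
  -- reflect the integral for b
  have hB' : b = ∫ t in Set.Ioc 0 Δ, (μ₁ (Set.Iic t)).toReal := by
    rw [hB, ← intervalIntegral.integral_of_le hΔ.le,
      intervalIntegral.integral_comp_sub_left (fun t => (μ₁ (Set.Iic t)).toReal) Δ,
      sub_self, sub_zero, intervalIntegral.integral_of_le hΔ.le]
  -- measurability of the CDF-type functions
  have meas₀ : Measurable fun t : ℝ => (μ₀ (Set.Ici t)).toReal := by
    apply Antitone.measurable
    intro s t hst
    exact ENNReal.toReal_mono (measure_ne_top _ _)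
      (measure_mono (Set.Ici_subset_Ici.mpr hst))
  have meas₁ : Measurable fun t : ℝ => (μ₁ (Set.Iic t)).toReal := by
    apply Monotone.measurable
    intro s t hst
    exact ENNReal.toReal_mono (measure_ne_top _ _)
      (measure_mono (Set.Iic_subset_Iic.mpr hst))
  -- integrability on Ioc 0 Δ
  have intconst : IntegrableOn (fun _ : ℝ => (1 : ℝ)) (Set.Ioc 0 Δ) volume :=
    (integrableOn_const_iff).mpr (Or.inr measure_Ioc_lt_top)
  have intg₀ : IntegrableOn (fun t : ℝ => (μ₀ (Set.Ici t)).toReal) (Set.Ioc 0 Δ) volume := by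
    refine Integrable.mono' intconst meas₀.aestronglyMeasurable ?_
    refine Filter.Eventually.of_forall fun t => ?_
    rw [Real.norm_eq_abs, abs_of_nonneg ENNReal.toReal_nonneg]
    exact toReal_prob_le_one μ₀ _
  have intg₁ : IntegrableOn (fun t : ℝ => (μ₁ (Set.Iic t)).toReal) (Set.Ioc 0 Δ) volume := by
    refine Integrable.mono' intconst meas₁.aestronglyMeasurable ?_
    refine Filter.Eventually.of_forall fun t => ?_
    rw [Real.norm_eq_abs, abs_of_nonneg ENNReal.toReal_nonneg]
    exact toReal_prob_le_one μ₁ _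
  -- main integral inequality
  have key : (1 - δ) * Δ ≤ a + Real.exp ε * b := by
    have hsum : a + Real.exp ε * b
        = ∫ t in Set.Ioc 0 Δ,
            ((μ₀ (Set.Ici t)).toReal + Real.exp ε * (μ₁ (Set.Iic t)).toReal) := by
      rw [hA, hB', integral_add intg₀ (intg₁.const_mul _), integral_const_mul]
    have hconst : ∫ t in Set.Ioc 0 Δ, (1 - δ : ℝ) = (1 - δ) * Δ := by
      rw [setIntegral_const, measureReal_def, Real.volume_Ioc, ENNReal.toReal_ofReal (by linarith), smul_eq_mul]
      ring
    rw [hsum, ← hconst]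
    refine setIntegral_mono_on (intconst.sub ((integrableOn_const_iff).mpr (Or.inr measure_Ioc_lt_top)))
      (intg₀.add (intg₁.const_mul _)) measurableSet_Ioc ?_
    intro t ht
    have htm : t ∈ Set.Icc (0 : ℝ) Δ := ⟨ht.1.le, ht.2⟩
    have h1 := hdp t htm
    have h2 : (μ₀ (Set.Iio t)).toReal ≤ (μ₀ (Set.Iic t)).toReal :=
      ENNReal.toReal_mono (measure_ne_top _ _) (measure_mono Set.Iio_subset_Iic_self)
    have h3 : (μ₀ (Set.Ici t)).toReal = 1 - (μ₀ (Set.Iio t)).toReal := by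
      have := prob_compl_eq_one_sub (μ := μ₀) (measurableSet_Iio (a := t))
      rw [Set.compl_Iio] at this
      rw [this, ENNReal.toReal_sub_of_le (prob_le_one) ENNReal.one_ne_top, ENNReal.toReal_one]
    rw [h3]
    linarith
  refine ⟨key, ?_⟩
  have hpos : (0 : ℝ) < 1 + Real.exp ε := by positivity
  rw [div_le_iff₀ hpos]
  have h1 : a ≤ max a b := le_max_left a b
  have h2 : b ≤ max a b := le_max_right a b
  nlinarith [Real.exp_pos ε]
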